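/- Let K be a field of characteristic ≠ 2 and M, N finite-dimensional K-vector spaces. A K-linear subspace I of Hom_K(M, N) is an inner ideal (i.e. f ∘ y ∘ f ∈ I for all f ∈ I and all y ∈ Hom_K(N, M)) if and only if there exist subspaces e ⊆ M and h ⊆ N such that I = I_{e,h} = { f ∈ Hom_K(M, N) : e ⊆ ker f and im f ⊆ h }. -/

import Mathlib

set_option maxRecDepth 8000

open LinearMap Module

section Aux

variable {K M N : Type*} [Field K]
    [AddCommGroup M] [Module K M] [AddCommGroup N] [Module K N]

/-- composing a rank-one map with linear maps. -/
private lemma comp_smulRight_comp (f g : M →ₗ[K] N) (ψ : Module.Dual K N) (m : M) :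
    f ∘ₗ (ψ.smulRight m) ∘ₗ g = (g.dualMap ψ).smulRight (f m) := by
  ext x
  simp

private lemma exists_dual_eq_one [FiniteDimensional K N] {v : N} (hv : v ≠ 0) :
    ∃ φ : Module.Dual K N, φ v = 1 := by
  have h := (not_iff_not.mpr (Module.forall_dual_apply_eq_zero_iff K v)).mpr hv
  push_neg at h
  obtain ⟨φ, hφ⟩ := h
  exact ⟨(φ v)⁻¹ • φ, by simp [inv_mul_cancel₀ hφ]⟩

/-- if `ker b ≤ ker a` for functionals then `a` is a multiple of `b`. -/
private lemma dual_smul_of_ker_le {a b : Module.Dual K M}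
    (h : ∀ p, b p = 0 → a p = 0) (hb : b ≠ 0) : ∃ c : K, a = c • b := by
  obtain ⟨q, hq⟩ : ∃ q, b q ≠ 0 := by
    by_contra hc; push_neg at hc; exact hb (LinearMap.ext fun x => by simp [hc x])
  refine ⟨a q / b q, LinearMap.ext fun x => ?_⟩
  have hx : b (x - (b x / b q) • q) = 0 := by
    simp [map_sub, map_smul, div_mul_cancel₀ _ hq]
  have := h _ hx
  rw [map_sub, map_smul, sub_eq_zero] at this
  rw [this]
  simp [smul_eq_mul]
  field_simp

/-- The key lemma: rank-one maps `(ψ ∘ g) ⊗ f m` lie in the inner ideal. -/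
private lemma key [FiniteDimensional K M] [FiniteDimensional K N]
    (hchar : (2 : K) ≠ 0)
    (I : Submodule K (M →ₗ[K] N))
    (hI : ∀ f ∈ I, ∀ y : N →ₗ[K] M, f ∘ₗ y ∘ₗ f ∈ I)
    {f g : M →ₗ[K] N} (hf : f ∈ I) (hg : g ∈ I)
    (ψ : Module.Dual K N) (m : M) :
    (g.dualMap ψ).smulRight (f m) ∈ I := by
  set a : Module.Dual K M := g.dualMap ψ with ha
  set b : Module.Dual K M := f.dualMap ψ with hb
  set n1 : N := f m with hn1
  set n2 : N := g m with hn2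
  set t : M →ₗ[K] N := a.smulRight n1 with ht
  set s : M →ₗ[K] N := b.smulRight n2 with hs
  show t ∈ I
  have hr1 : b.smulRight n1 ∈ I := by
    rw [← comp_smulRight_comp f f ψ m]; exact hI f hf _
  have hr2 : a.smulRight n2 ∈ I := by
    rw [← comp_smulRight_comp g g ψ m]; exact hI g hg _
  have hts : t + s ∈ I := by
    have h1 : (f + g) ∘ₗ (ψ.smulRight m) ∘ₗ (f + g) ∈ I := hI _ (I.add_mem hf hg) _
    rw [comp_smulRight_comp] at h1
    have heq : t + s = ((f + g).dualMap ψ).smulRight ((f + g) m)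
        - b.smulRight n1 - a.smulRight n2 := by
      ext x
      simp only [ht, hs, ha, hb, hn1, hn2, LinearMap.sub_apply, LinearMap.add_apply,
        LinearMap.smulRight_apply, LinearMap.dualMap_apply, map_add, smul_eq_mul]
      module
    rw [heq]
    exact I.sub_mem (I.sub_mem h1 hr1) hr2
  have hkey : ∀ (χ : Module.Dual K N) (p : M),
      (χ n1 * a p) • t + (χ n2 * b p) • s ∈ I := by
    intro χ p
    have h1 := hI (t + s) hts (χ.smulRight p)
    have heq : (χ n1 * a p) • t + (χ n2 * b p) • s =
        (t + s) ∘ₗ (χ.smulRight p) ∘ₗ (t + s)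
          - (χ n1 * b p) • (a.smulRight n2) - (χ n2 * a p) • (b.smulRight n1) := by
      ext x
      simp only [ht, hs, LinearMap.sub_apply, LinearMap.add_apply, LinearMap.smul_apply,
        LinearMap.coe_comp, Function.comp_apply, LinearMap.smulRight_apply, map_add,
        map_smul, smul_eq_mul]
      module
    rw [heq]
    exact I.sub_mem (I.sub_mem h1 (I.smul_mem _ hr2)) (I.smul_mem _ hr1)
  by_cases ht0 : t = 0
  · rw [ht0]; exact I.zero_mem
  -- t ≠ 0 : extract a ≠ 0 at some point and n1 ≠ 0
  obtain ⟨x0, hx0⟩ : ∃ x, t x ≠ 0 := by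
    by_contra hc; push_neg at hc; exact ht0 (LinearMap.ext fun x => by simp [hc x])
  have hax0 : a x0 ≠ 0 := fun h => hx0 (by simp [ht, h])
  have hn1ne : n1 ≠ 0 := fun h => hx0 (by simp [ht, h])
  set p0 : M := (a x0)⁻¹ • x0 with hp0
  have hap0 : a p0 = 1 := by simp [hp0, map_smul, inv_mul_cancel₀ hax0]
  obtain ⟨χ0, hχ0⟩ := exists_dual_eq_one (K := K) hn1ne
  by_cases hμ : ∃ μ : K, n2 = μ • n1
  · obtain ⟨μ, hμ⟩ := hμ
    by_cases hν : ∃ ν : K, b = ν • a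
    · obtain ⟨ν, hν⟩ := hν
      have hseq : s = (μ * ν) • t := by
        ext x
        simp only [hs, ht, hν, hμ, LinearMap.smul_apply, LinearMap.smulRight_apply,
          smul_eq_mul]
        module
      have h1 : (1 + μ * ν) • t ∈ I := by
        have : t + s = (1 + μ * ν) • t := by rw [hseq]; module
        rw [← this]; exact hts
      have hχ0n2 : χ0 n2 = μ := by rw [hμ]; simp [hχ0]
      have hbp0 : b p0 = ν := by rw [hν]; simp [hap0]
      have h2 : (1 + (μ * ν) * (μ * ν)) • t ∈ I := by
        have h3 := hkey χ0 p0
        rw [hχ0, hχ0n2, hbp0, hap0] at h3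
        have heq : (1 + (μ * ν) * (μ * ν)) • t = ((1 : K) * 1) • t + (μ * ν) • s := by
          rw [hseq]; module
        rw [heq]; exact h3
      by_cases hl : 1 + μ * ν = 0
      · have hmn : μ * ν = -1 := by linear_combination hl
        have h2' : (2 : K) • t ∈ I := by
          have : (1 + (μ * ν) * (μ * ν)) = (2 : K) := by rw [hmn]; ring
          rwa [this] at h2
        have := I.smul_mem (2 : K)⁻¹ h2'
        rwa [inv_smul_smul₀ hchar] at this
      · have := I.smul_mem (1 + μ * ν)⁻¹ h1
        rwa [inv_smul_smul₀ hl] at this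
    · -- b not a multiple of a : find p with b p = 0, a p ≠ 0
      have hbp : ∃ p, b p = 0 ∧ a p ≠ 0 := by
        by_contra hc; push_neg at hc
        have hane : a ≠ 0 := fun h => hax0 (by simp [h])
        by_cases hb0 : b = 0
        · exact hane (LinearMap.ext fun x => hc x (by simp [hb0]))
        · obtain ⟨c, hcab⟩ := dual_smul_of_ker_le (fun p hp => hc p hp) hb0
          have hc0 : c ≠ 0 := fun h => hane (by rw [hcab, h, zero_smul])
          exact hν ⟨c⁻¹, by rw [hcab]; ext x; simp [smul_smul, inv_mul_cancel₀ hc0]⟩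
      obtain ⟨p, hbp0, hap⟩ := hbp
      have h3 := hkey χ0 ((a p)⁻¹ • p)
      rw [hχ0] at h3
      simp [map_smul, hbp0, inv_mul_cancel₀ hap] at h3
      exact h3
  · -- n2 not a multiple of n1 : find χ with χ n1 = 1, χ n2 = 0
    have hn1span : n1 ∉ Submodule.span K {n2} := by
      intro hmem
      obtain ⟨c, hc⟩ := Submodule.mem_span_singleton.mp hmem
      have hc0 : c ≠ 0 := fun h => hn1ne (by rw [← hc, h, zero_smul])
      exact hμ ⟨c⁻¹, by rw [← hc]; simp [smul_smul, inv_mul_cancel₀ hc0]⟩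
    set S := Submodule.span K {n2} with hS
    have hq1 : S.mkQ n1 ≠ 0 := by
      rw [Submodule.mkQ_apply, ne_eq, Submodule.Quotient.mk_eq_zero]
      exact hn1span
    obtain ⟨χ', hχ'⟩ := exists_dual_eq_one (K := K) hq1
    set χ : Module.Dual K N := χ' ∘ₗ S.mkQ with hχ
    have hχn1 : χ n1 = 1 := hχ'
    have hχn2 : χ n2 = 0 := by
      simp [hχ, (Submodule.Quotient.mk_eq_zero S).mpr
        (Submodule.mem_span_singleton_self n2)]
    have h3 := hkey χ p0
    rw [hχn1, hχn2, hap0] at h3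
    simpa using h3

end Aux

/-- A linear subspace `I ⊆ Hom_K(M, N)` is an inner ideal (`f ∘ y ∘ f ∈ I` for all
`f ∈ I`, `y : N →ₗ M`) iff `I = I_{e,h} = { f : e ⊆ ker f, im f ⊆ h }` for some
subspaces `e ⊆ M`, `h ⊆ N`. -/
theorem inner_ideal_iff_Ieh
    {K M N : Type*} [Field K] (hchar : (2 : K) ≠ 0)
    [AddCommGroup M] [Module K M] [AddCommGroup N] [Module K N]
    [FiniteDimensional K M] [FiniteDimensional K N]
    (I : Submodule K (M →ₗ[K] N)) :
    (∀ f ∈ I, ∀ y : N →ₗ[K] M, f ∘ₗ y ∘ₗ f ∈ I) ↔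
      ∃ (e : Submodule K M) (h : Submodule K N),
        (I : Set (M →ₗ[K] N)) =
          {f : M →ₗ[K] N | e ≤ LinearMap.ker f ∧ LinearMap.range f ≤ h} := by
  constructor
  · intro hI
    set e : Submodule K M := ⨅ (f : I), LinearMap.ker (f : M →ₗ[K] N) with he
    set h : Submodule K N := ⨆ (f : I), LinearMap.range (f : M →ₗ[K] N) with hh
    refine ⟨e, h, Set.ext fun f => ?_⟩
    constructor
    · intro hf
      exact ⟨iInf_le (fun (f : I) => LinearMap.ker (f : M →ₗ[K] N)) ⟨f, hf⟩,
        le_iSup (fun (f : I) => LinearMap.range (f : M →ₗ[K] N)) ⟨f, hf⟩⟩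
    · rintro ⟨hker, hran⟩
      -- Step 1 : every rank-one φ ⊗ n with e ≤ ker φ, n ∈ h lies in I
      have rankone : ∀ (φ : Module.Dual K M), (∀ x ∈ e, φ x = 0) → ∀ n ∈ h,
          φ.smulRight n ∈ I := by
        intro φ hφ n hn
        -- φ belongs to the span of the ψ ∘ g, g ∈ I
        set W : Submodule K (Module.Dual K M) :=
          ⨆ (g : I), LinearMap.range (LinearMap.dualMap (g : M →ₗ[K] N)) with hW
        have hWe : W.dualCoannihilator = e := by
          ext x
          rw [Submodule.mem_dualCoannihilator]
          constructor
          · intro hx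
            rw [he, Submodule.mem_iInf]
            intro g
            rw [LinearMap.mem_ker, ← Module.forall_dual_apply_eq_zero_iff K]
            intro ψ
            exact hx _ (le_iSup (fun (g : I) =>
              LinearMap.range (LinearMap.dualMap (g : M →ₗ[K] N))) g
              ⟨ψ, rfl⟩)
          · intro hx φ' hφ'
            refine Submodule.iSup_induction _ (motive := fun φ'' => φ'' x = 0) hφ'
              (fun g ψ hψ => ?_) (by simp)
              (fun ψ₁ ψ₂ h1 h2 => by
                show (ψ₁ + ψ₂) x = 0
                simp only [LinearMap.add_apply]
                rw [show ψ₁ x = 0 from h1, show ψ₂ x = 0 from h2, add_zero])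
            obtain ⟨χ, rfl⟩ := hψ
            show ((g : M →ₗ[K] N).dualMap χ) x = 0
            have hgx : (g : M →ₗ[K] N) x = 0 := by
              have := (Submodule.mem_iInf _).mp (he ▸ hx) g
              exact this
            simp [LinearMap.dualMap_apply, hgx]
        have hφW : φ ∈ W := by
          have h1 : φ ∈ e.dualAnnihilator := (Submodule.mem_dualAnnihilator φ).mpr hφ
          rw [← hWe] at h1
          rwa [Subspace.dualCoannihilator_dualAnnihilator_eq] at h1
        -- induction on φ ∈ W and n ∈ h
        refine Submodule.iSup_induction _ hφW
          (motive := fun φ' => φ'.smulRight n ∈ I) (fun g ψ hψ => ?_) (by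
            show (0 : Module.Dual K M).smulRight n ∈ I
            have h0 : (0 : Module.Dual K M).smulRight n = 0 := by ext x; simp
            rw [h0]; exact I.zero_mem)
          (fun φ₁ φ₂ h1 h2 => by
            show (φ₁ + φ₂).smulRight n ∈ I
            have hadd : (φ₁ + φ₂).smulRight n = φ₁.smulRight n + φ₂.smulRight n := by
              ext x; simp [add_smul]
            rw [hadd]
            exact I.add_mem h1 h2)
        obtain ⟨χ, rfl⟩ := hψ
        refine Submodule.iSup_induction _ (hh ▸ hn)
          (motive := fun n' => ((g : M →ₗ[K] N).dualMap χ).smulRight n' ∈ I)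
          (fun f' m hm => ?_) (by
            show ((g : M →ₗ[K] N).dualMap χ).smulRight (0 : N) ∈ I
            have h0 : ((g : M →ₗ[K] N).dualMap χ).smulRight (0 : N) = 0 := by ext x; simp
            rw [h0]; exact I.zero_mem)
          (fun n₁ n₂ h1 h2 => by
            show ((g : M →ₗ[K] N).dualMap χ).smulRight (n₁ + n₂) ∈ I
            have hadd : ((g : M →ₗ[K] N).dualMap χ).smulRight (n₁ + n₂) =
                ((g : M →ₗ[K] N).dualMap χ).smulRight n₁ +
                ((g : M →ₗ[K] N).dualMap χ).smulRight n₂ := by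
              ext x; simp [smul_add]
            rw [hadd]
            exact I.add_mem h1 h2)
        obtain ⟨m, rfl⟩ := hm
        exact key hchar I hI f'.2 g.2 χ m
      -- Step 2 : decompose f into rank-one maps
      set Q := M ⧸ e with hQ
      set fbar : Q →ₗ[K] N := e.liftQ f hker with hfbar
      set b : Basis (Fin (Module.finrank K Q)) K Q := Module.finBasis K Q with hbb
      have hdecomp : f = ∑ i, ((b.coord i) ∘ₗ e.mkQ).smulRight (fbar (b i)) := by
        ext x
        rw [LinearMap.sum_apply]
        have hfx : f x = fbar (e.mkQ x) := rfl
        rw [hfx]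
        conv_lhs => rw [← b.sum_repr (e.mkQ x)]
        rw [map_sum]
        exact Finset.sum_congr rfl fun i _ => by rw [map_smul]; rfl
      rw [hdecomp]
      refine I.sum_mem fun i _ => ?_
      refine rankone _ (fun x hx => ?_) _ ?_
      · have h0 : e.mkQ x = 0 := by
          rw [Submodule.mkQ_apply]
          exact (Submodule.Quotient.mk_eq_zero e).mpr hx
        simp [h0]
      · have : fbar (b i) ∈ LinearMap.range fbar := ⟨b i, rfl⟩
        rw [hfbar, Submodule.range_liftQ] at this
        exact hran this
  · rintro ⟨e, h, hI⟩
    intro f hf y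
    have hf' : f ∈ {f : M →ₗ[K] N | e ≤ LinearMap.ker f ∧ LinearMap.range f ≤ h} := by
      rw [← hI]; exact hf
    obtain ⟨hker, hran⟩ := hf'
    have : f ∘ₗ y ∘ₗ f ∈ {f : M →ₗ[K] N | e ≤ LinearMap.ker f ∧ LinearMap.range f ≤ h} := by
      constructor
      · intro x hx
        have hx0 : f x = 0 := hker hx
        simp [LinearMap.mem_ker, hx0]
      · rintro n ⟨x, rfl⟩
        exact hran ⟨y (f x), rfl⟩
    have hmem : f ∘ₗ y ∘ₗ f ∈ (I : Set (M →ₗ[K] N)) := by rw [hI]; exact this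
    exact hmem
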